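/- For a strongly convex rational polyhedral cone σ, the set S_σ = σ̌ ∩ M is a finitely generated additive submonoid of the lattice M (Gordan's lemma). -/

import Mathlib

open Set Filter Topology Metric

noncomputable section

open Set Filter Topology Metric

noncomputable section

/-- Euclidean pairing on `Fin d → ℝ`. -/
def dotR {d : ℕ} (u v : Fin d → ℝ) : ℝ := ∑ i, u i * v i

/-- The cone generated by a finite set of rational vectors. -/
def coneOf {d : ℕ} (S : Finset (Fin d → ℚ)) : Set (Fin d → ℝ) :=
  {x | ∃ c : (Fin d → ℚ) → ℝ, (∀ s, 0 ≤ c s) ∧ x = ∑ s ∈ S, c s • (fun i => (s i : ℝ))}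

/-- A rational polyhedral cone. -/
def IsRatPolyhedralCone {d : ℕ} (σ : Set (Fin d → ℝ)) : Prop :=
  ∃ S : Finset (Fin d → ℚ), σ = coneOf S

/-- Strong convexity: `σ ∩ (−σ) ⊆ {0}`. -/
def StronglyConvexCone {d : ℕ} (σ : Set (Fin d → ℝ)) : Prop := σ ∩ (-σ) ⊆ {0}

/-- The polar (dual) cone. -/
def polarCone {d : ℕ} (σ : Set (Fin d → ℝ)) : Set (Fin d → ℝ) := {v | ∀ u ∈ σ, 0 ≤ dotR u v}

/-- The dimension of a cone: the dimension of its linear span. -/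
def coneDim {d : ℕ} (σ : Set (Fin d → ℝ)) : ℕ := Module.finrank ℝ (Submodule.span ℝ σ)

/-- Casting an integral lattice vector into `ℝ^d`. -/
def expCast {d : ℕ} (v : Fin d → ℤ) : Fin d → ℝ := fun i => (v i : ℝ)

/-- The Newton polygon of a Laurent datum `g` relative to a cone `C`:
the convex hull of `⋃_{v ∈ supp g} (v + C)`. -/
def NPoly {d : ℕ} (C : Set (Fin d → ℝ)) (g : (Fin d → ℤ) →₀ ℂ) : Set (Fin d → ℝ) :=
  convexHull ℝ (⋃ v ∈ g.support, (fun c => expCast v + c) '' C)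

/-- A face of a convex set, as an extreme subset. -/
def IsFaceOf {d : ℕ} (C Δ : Set (Fin d → ℝ)) : Prop := IsExtreme ℝ C Δ

open Classical in
/-- The part of `g` supported on a face `γ`. -/
def facePart {d : ℕ} (g : (Fin d → ℤ) →₀ ℂ) (γ : Set (Fin d → ℝ)) : (Fin d → ℤ) →₀ ℂ :=
  g.filter (fun v => expCast v ∈ γ)

/-- Evaluation of the Laurent polynomial associated to `g` on the torus. -/
def laurentEval {d : ℕ} (g : (Fin d → ℤ) →₀ ℂ) (x : Fin d → ℂ) : ℂ :=
  ∑ v ∈ g.support, g v * ∏ i, x i ^ (v i)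

/-- The `i`-th logarithmic derivative of the Laurent polynomial of `g`. -/
def laurentDeriv {d : ℕ} (g : (Fin d → ℤ) →₀ ℂ) (i : Fin d) (x : Fin d → ℂ) : ℂ :=
  ∑ v ∈ g.support, (v i : ℂ) * g v * ∏ j, x j ^ (v j)

/-- Non-degeneracy of `g` (w.r.t. the cone `σ`): for every compact face `γ` of the Newton
polygon, the hypersurface `{L(g_γ) = 0}` is smooth in the torus. -/
def NonDeg {d : ℕ} (σ : Set (Fin d → ℝ)) (g : (Fin d → ℤ) →₀ ℂ) : Prop :=
  ∀ γ : Set (Fin d → ℝ), γ.Nonempty → IsCompact γ →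
    IsExtreme ℝ (NPoly (polarCone σ) g) γ →
    ∀ x : Fin d → ℂ, (∀ i, x i ≠ 0) → laurentEval (facePart g γ) x = 0 →
      ∃ i, laurentDeriv (facePart g γ) i x ≠ 0

/-- The additive monoid `S_σ = σ̌ ∩ M` of lattice points of the polar cone. -/
def latticeMonoid {d : ℕ} (σ : Set (Fin d → ℝ)) : AddSubmonoid (Fin d → ℤ) where
  carrier := {v | expCast v ∈ polarCone σ}
  zero_mem' := by
    show expCast (0 : Fin d → ℤ) ∈ polarCone σ
    intro u hu
    simp [dotR, expCast]
  add_mem' := by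
    intro a b ha hb
    show expCast (a + b) ∈ polarCone σ
    intro u hu
    have h1 : 0 ≤ dotR u (expCast a) := ha u hu
    have h2 : 0 ≤ dotR u (expCast b) := hb u hu
    have key : dotR u (expCast (a + b)) = dotR u (expCast a) + dotR u (expCast b) := by
      simp only [dotR, expCast, Pi.add_apply, Int.cast_add, mul_add, Finset.sum_add_distrib]
    rw [key]
    exact add_nonneg h1 h2


open Finset in
/-- A subtraction-closed submonoid of `ι → ℕ` is finitely generated (Dickson). -/
lemma fg_of_subclosed {ι : Type} [Fintype ι] (N : AddSubmonoid (ι → ℕ))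
    (hsub : ∀ x y, x ∈ N → y ∈ N → x ≤ y → y - x ∈ N) : N.FG := by
  classical
  set A : Set (ι → ℕ) := (N : Set (ι → ℕ)) \ {0} with hA
  set T : Set (ι → ℕ) := {x ∈ A | ∀ y ∈ A, y ≤ x → y = x} with hT
  have hTfin : T.Finite := by
    have hanti : IsAntichain (· ≤ ·) T := by
      intro a ha b hb hne hle
      exact hne (hb.2 a ha.1 hle)
    exact hanti.finite_of_partiallyWellOrderedOn
      (Set.isPWO_of_wellQuasiOrderedLE T)
  -- every element of A has a minimal element of A below it
  have hmin : ∀ n : ℕ, ∀ x ∈ A, (∑ i, x i) = n → ∃ g ∈ T, g ≤ x := by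
    intro n
    induction n using Nat.strong_induction_on with
    | _ n ih =>
      intro x hx hxn
      by_cases hxt : ∀ y ∈ A, y ≤ x → y = x
      · exact ⟨x, ⟨hx, hxt⟩, le_refl x⟩
      · push_neg at hxt
        obtain ⟨y, hy, hyx, hne⟩ := hxt
        have hle' : ∀ i ∈ Finset.univ, y i ≤ x i := fun i _ => hyx i
        have hlt : ∑ i, y i < ∑ i, x i := by
          rcases lt_or_eq_of_le (Finset.sum_le_sum hle') with h | h
          · exact h
          · exact absurd (funext fun i =>
              (Finset.sum_eq_sum_iff_of_le hle').mp h i (Finset.mem_univ i)) hne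
        obtain ⟨g, hg, hgy⟩ := ih (∑ i, y i) (hxn ▸ hlt) y hy rfl
        exact ⟨g, hg, le_trans hgy hyx⟩
  have hgen : ∀ n : ℕ, ∀ x ∈ N, (∑ i, x i) = n → x ∈ AddSubmonoid.closure T := by
    intro n
    induction n using Nat.strong_induction_on with
    | _ n ih =>
      intro x hx hxn
      by_cases hx0 : x = 0
      · subst hx0; exact zero_mem _
      · obtain ⟨g, hg, hgx⟩ := hmin _ x ⟨hx, hx0⟩ rfl
        have hgN : g ∈ N := hg.1.1
        have hrN : x - g ∈ N := hsub g x hgN hx hgx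
        have hxeq : x = g + (x - g) := by
          funext i
          have h : g i ≤ x i := hgx i
          simp only [Pi.add_apply, Pi.sub_apply]
          omega
        have hg0 : g ≠ 0 := hg.1.2
        have hgpos : 0 < ∑ i, g i := by
          rcases Nat.eq_zero_or_pos (∑ i, g i) with h | h
          · exact absurd (funext fun i =>
              (Finset.sum_eq_zero_iff.mp h) i (Finset.mem_univ i)) hg0
          · exact h
        have hsum : (∑ i, (x - g) i) < n := by
          have h1 : ∀ i ∈ Finset.univ, (x - g) i + g i = x i := by
            intro i _
            have h : g i ≤ x i := hgx i
            simp only [Pi.sub_apply]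
            omega
          have h2 : (∑ i, (x - g) i) + ∑ i, g i = ∑ i, x i := by
            rw [← Finset.sum_add_distrib]
            exact Finset.sum_congr rfl h1
          omega
        rw [hxeq]
        exact add_mem (AddSubmonoid.subset_closure hg) (ih _ hsum _ hrN rfl)
  rw [AddSubmonoid.fg_iff]
  refine ⟨T, le_antisymm ?_ ?_, hTfin⟩
  · rw [AddSubmonoid.closure_le]
    exact fun x hx => hx.1.1
  · exact fun x hx => hgen _ x hx rfl


/-- The submonoid of `ℤ^d` defined by finitely many integer linear inequalities. -/
def ineqMonoid {d : ℕ} {κ : Type} (c : κ → Fin d → ℤ) : AddSubmonoid (Fin d → ℤ) where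
  carrier := {v | ∀ j, 0 ≤ ∑ i, c j i * v i}
  zero_mem' := by intro j; simp
  add_mem' := by
    intro a b ha hb j
    have : ∑ i, c j i * (a + b) i = (∑ i, c j i * a i) + ∑ i, c j i * b i := by
      rw [← Finset.sum_add_distrib]
      exact Finset.sum_congr rfl fun i _ => by simp [Pi.add_apply]; ring
    rw [this]
    exact add_nonneg (ha j) (hb j)

lemma ineqMonoid_fg {d : ℕ} {κ : Type} [Fintype κ] (c : κ → Fin d → ℤ) :
    (ineqMonoid c).FG := by
  classical
  -- slack-variable encoding in ℕ^(d ⊕ d ⊕ κ)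
  set ι := (Fin d ⊕ Fin d) ⊕ κ with hι
  let φ : (ι → ℕ) →+ (Fin d → ℤ) :=
    { toFun := fun u => fun i => (u (.inl (.inl i)) : ℤ) - (u (.inl (.inr i)) : ℤ)
      map_zero' := by funext i; simp
      map_add' := by intro u v; funext i; simp [Pi.add_apply]; ring }
  let E : AddSubmonoid (ι → ℕ) :=
    { carrier := {u | ∀ j, ∑ i, c j i * ((u (.inl (.inl i)) : ℤ) - (u (.inl (.inr i)) : ℤ))
        = (u (.inr j) : ℤ)}
      zero_mem' := by intro j; simp
      add_mem' := by
        intro a b ha hb j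
        have h : ∑ i, c j i * (((a + b) (.inl (.inl i)) : ℤ) - ((a + b) (.inl (.inr i)) : ℤ))
            = (∑ i, c j i * ((a (.inl (.inl i)) : ℤ) - (a (.inl (.inr i)) : ℤ)))
            + ∑ i, c j i * ((b (.inl (.inl i)) : ℤ) - (b (.inl (.inr i)) : ℤ)) := by
          rw [← Finset.sum_add_distrib]
          refine Finset.sum_congr rfl fun i _ => ?_
          simp only [Pi.add_apply]
          push_cast
          ring
        rw [h, ha j, hb j]
        simp [Pi.add_apply] }
  have hE : E.FG := by
    apply fg_of_subclosed
    intro x y hx hy hxy j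
    have h : ∑ i, c j i * (((y - x) (.inl (.inl i)) : ℤ) - ((y - x) (.inl (.inr i)) : ℤ))
        = (∑ i, c j i * ((y (.inl (.inl i)) : ℤ) - (y (.inl (.inr i)) : ℤ)))
        - ∑ i, c j i * ((x (.inl (.inl i)) : ℤ) - (x (.inl (.inr i)) : ℤ)) := by
      rw [← Finset.sum_sub_distrib]
      refine Finset.sum_congr rfl fun i _ => ?_
      simp only [Pi.sub_apply]
      rw [Nat.cast_sub (hxy _), Nat.cast_sub (hxy _)]
      ring
    rw [h, hx j, hy j]
    simp only [Pi.sub_apply]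
    rw [Nat.cast_sub (hxy _)]
  have hmap : AddSubmonoid.map φ E = ineqMonoid c := by
    ext v
    constructor
    · rintro ⟨u, hu, rfl⟩ j
      have := hu j
      show (0:ℤ) ≤ ∑ i, c j i * ((u (.inl (.inl i)) : ℤ) - (u (.inl (.inr i)) : ℤ))
      rw [this]
      exact Int.natCast_nonneg _
    · intro hv
      refine ⟨fun p => Sum.rec (fun q => Sum.rec (fun i => (v i).toNat) (fun i => (-v i).toNat) q)
        (fun j => (∑ i, c j i * v i).toNat) p, ?_, ?_⟩
      · intro j
        have hval : ∀ i, ((v i).toNat : ℤ) - ((-v i).toNat : ℤ) = v i := by intro i; omega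
        have : ∑ i, c j i * (((v i).toNat : ℤ) - ((-v i).toNat : ℤ)) = ∑ i, c j i * v i := by
          exact Finset.sum_congr rfl fun i _ => by rw [hval i]
        rw [this]
        exact (Int.toNat_of_nonneg (hv j)).symm
      · funext i
        show ((v i).toNat : ℤ) - ((-v i).toNat : ℤ) = v i
        omega
  rw [← hmap]
  exact AddSubmonoid.FG.map hE φ

lemma mem_polar_coneOf {d : ℕ} (S : Finset (Fin d → ℚ)) (x : Fin d → ℝ) :
    x ∈ polarCone (coneOf S) ↔ ∀ s ∈ S, 0 ≤ dotR (fun i => (s i : ℝ)) x := by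
  classical
  constructor
  · intro h s hs
    refine h _ ⟨fun t => if t = s then 1 else 0, fun t => by positivity, ?_⟩
    funext i
    rw [Finset.sum_apply]
    have hc : ∀ t ∈ S, ((if t = s then (1:ℝ) else 0) • fun k => ((t k : ℝ))) i
        = if t = s then ((s i : ℝ)) else 0 := by
      intro t _
      by_cases hts : t = s <;> simp [hts]
    rw [Finset.sum_congr rfl hc, Finset.sum_ite_eq' S s (fun _ => ((s i : ℝ))), if_pos hs]
  · rintro h u ⟨c, hc, rfl⟩
    have key : dotR (∑ s ∈ S, c s • fun k => ((s k : ℝ))) x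
        = ∑ s ∈ S, c s * dotR (fun k => (s k : ℝ)) x := by
      unfold dotR
      have h1 : ∀ i ∈ Finset.univ,
          ((∑ t ∈ S, c t • fun k => ((t k : ℝ))) i) * x i
          = ∑ t ∈ S, c t * ((t i : ℝ) * x i) := by
        intro i _
        rw [Finset.sum_apply, Finset.sum_mul]
        exact Finset.sum_congr rfl fun t _ => by simp [mul_assoc]
      rw [Finset.sum_congr rfl h1, Finset.sum_comm]
      exact Finset.sum_congr rfl fun t _ => by rw [Finset.mul_sum]
    rw [key]
    exact Finset.sum_nonneg fun s hs => mul_nonneg (hc s) (h s hs)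

/-- Integer vector obtained from a rational one by clearing denominators. -/
def intVec {d : ℕ} (s : Fin d → ℚ) : Fin d → ℤ :=
  fun i => (((∏ j, (s j).den) / (s i).den : ℕ) : ℤ) * (s i).num

lemma intVec_cast {d : ℕ} (s : Fin d → ℚ) (i : Fin d) :
    ((intVec s i : ℚ)) = ((∏ j, (s j).den : ℕ) : ℚ) * s i := by
  have hdvd : (s i).den ∣ ∏ j, (s j).den := Finset.dvd_prod_of_mem _ (Finset.mem_univ i)
  have hden : ((s i).den : ℚ) ≠ 0 := by exact_mod_cast (s i).den_nz
  have h1 : ((∏ j, (s j).den) / (s i).den) * (s i).den = ∏ j, (s j).den :=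
    Nat.div_mul_cancel hdvd
  have hnum : ((s i).num : ℚ) = s i * ((s i).den : ℚ) :=
    (div_eq_iff hden).mp (Rat.num_div_den (s i))
  have e1 : ((intVec s i : ℚ)) =
      ((((∏ j, (s j).den) / (s i).den : ℕ) : ℚ)) * ((s i).num : ℚ) := by
    unfold intVec
    rw [Int.cast_mul, Int.cast_natCast]
  rw [e1, hnum, ← mul_assoc, mul_right_comm, ← Nat.cast_mul, h1]

lemma dot_nonneg_iff {d : ℕ} (s : Fin d → ℚ) (v : Fin d → ℤ) :
    0 ≤ dotR (fun i => (s i : ℝ)) (expCast v) ↔ 0 ≤ ∑ i, intVec s i * v i := by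
  have h1 : dotR (fun i => (s i : ℝ)) (expCast v) = ((∑ i, s i * (v i : ℚ) : ℚ) : ℝ) := by
    unfold dotR expCast
    push_cast
    rfl
  have hD : (0:ℚ) < ((∏ j, (s j).den : ℕ) : ℚ) := by
    have : 0 < ∏ j, (s j).den := Finset.prod_pos fun j _ => (s j).pos
    exact_mod_cast this
  have h2 : ((∑ i, intVec s i * v i : ℤ) : ℚ)
      = ((∏ j, (s j).den : ℕ) : ℚ) * ∑ i, s i * (v i : ℚ) := by
    rw [Int.cast_sum, Finset.mul_sum]
    refine Finset.sum_congr rfl fun i _ => ?_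
    rw [Int.cast_mul, intVec_cast s i]
    ring
  rw [h1]
  rw [show (0:ℝ) = ((0:ℚ):ℝ) by norm_num, Rat.cast_le]
  constructor
  · intro h
    have h' : (0:ℚ) ≤ ((∑ i, intVec s i * v i : ℤ) : ℚ) := by
      rw [h2]; exact mul_nonneg hD.le h
    exact_mod_cast h'
  · intro h
    have h' : (0:ℚ) ≤ ((∏ j, (s j).den : ℕ) : ℚ) * ∑ i, s i * (v i : ℚ) := by
      rw [← h2]; exact_mod_cast h
    nlinarith

/-- **Gordan's lemma.** For a strongly convex rational polyhedral cone `σ`,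
the monoid `S_σ = σ̌ ∩ M` is a finitely generated additive submonoid of the lattice. -/
theorem gordan_lemma (d : ℕ) (σ : Set (Fin d → ℝ))
    (hpoly : IsRatPolyhedralCone σ) (hsc : StronglyConvexCone σ) :
    (latticeMonoid σ).FG := by
  classical
  obtain ⟨S, rfl⟩ := hpoly
  have heq : latticeMonoid (coneOf S) = ineqMonoid (fun j : {s // s ∈ S} => intVec j.1) := by
    ext v
    have hmem : v ∈ latticeMonoid (coneOf S) ↔ expCast v ∈ polarCone (coneOf S) := Iff.rfl
    have hmem2 : v ∈ ineqMonoid (fun j : {s // s ∈ S} => intVec j.1) ↔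
        ∀ j : {s // s ∈ S}, 0 ≤ ∑ i, intVec j.1 i * v i := Iff.rfl
    rw [hmem, hmem2, mem_polar_coneOf]
    constructor
    · intro h j
      exact (dot_nonneg_iff j.1 v).mp (h j.1 j.2)
    · intro h s hs
      exact (dot_nonneg_iff s v).mpr (h ⟨s, hs⟩)
  rw [heq]
  exact ineqMonoid_fg _
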